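/- Let F ⊆ binom([n], d+1) have VC-dimension at most d, with witnesses B_i ⊆ F_i (so F_j ∩ F_i ≠ B_i for all j), and suppose |F| = C(n, d). Then for every Y ∈ binom([n], d+1) ∖ F and every proper subset Z ⊊ Y, there is exactly one index i with F_i ∩ Y = Z = B_i. -/

import Mathlib

open Finset

namespace Stmt19

variable {α : Type*} [DecidableEq α] [Fintype α]

/-- "monomial" indicator function -/
def eV (K S : Finset α) : ℚ := if K ⊆ S then 1 else 0

lemma key_sum (M S : Finset α) :
    ∑ R ∈ M.powerset, (-1 : ℚ) ^ R.card * eV R S = if M ∩ S = ∅ then 1 else 0 := by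
  have h1 : ∀ R ∈ M.powerset, (-1 : ℚ) ^ R.card * eV R S
      = if R ⊆ S then (-1 : ℚ) ^ R.card else 0 := by
    intro R _; unfold eV; split <;> simp
  rw [Finset.sum_congr rfl h1, ← Finset.sum_filter]
  have h2 : M.powerset.filter (· ⊆ S) = (M ∩ S).powerset := by
    ext R
    simp only [Finset.mem_filter, Finset.mem_powerset, Finset.subset_inter_iff]
  rw [h2]
  have := Finset.sum_powerset_neg_one_pow_card (x := M ∩ S)
  have hc : ((∑ R ∈ (M ∩ S).powerset, (-1 : ℤ) ^ R.card : ℤ) : ℚ)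
      = ∑ R ∈ (M ∩ S).powerset, (-1 : ℚ) ^ R.card := by push_cast; ring
  rw [← hc, this]
  split <;> simp

lemma expand (Bi Fi S : Finset α) (hBF : Bi ⊆ Fi) :
    ∑ R ∈ (Fi \ Bi).powerset, (-1 : ℚ) ^ R.card * eV (Bi ∪ R) S
      = if S ∩ Fi = Bi then 1 else 0 := by
  by_cases hB : Bi ⊆ S
  · have h1 : ∀ R ∈ (Fi \ Bi).powerset, (-1 : ℚ) ^ R.card * eV (Bi ∪ R) S
        = (-1 : ℚ) ^ R.card * eV R S := by
      intro R _; simp only [eV, Finset.union_subset_iff, hB, true_and]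
    rw [Finset.sum_congr rfl h1, key_sum]
    have : ((Fi \ Bi) ∩ S = ∅) = (S ∩ Fi = Bi) := by
      apply propext; constructor
      · intro h
        apply Finset.Subset.antisymm
        · intro x hx
          rw [Finset.mem_inter] at hx
          by_contra hxB
          have : x ∈ (Fi \ Bi) ∩ S := by
            rw [Finset.mem_inter, Finset.mem_sdiff]; exact ⟨⟨hx.2, hxB⟩, hx.1⟩
          rw [h] at this; exact absurd this (Finset.notMem_empty x)
        · intro x hx; rw [Finset.mem_inter]; exact ⟨hB hx, hBF hx⟩
      · intro h
        rw [Finset.eq_empty_iff_forall_notMem]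
        intro x hx
        rw [Finset.mem_inter, Finset.mem_sdiff] at hx
        have : x ∈ S ∩ Fi := Finset.mem_inter.2 ⟨hx.2, hx.1.1⟩
        rw [h] at this; exact hx.1.2 this
    simp only [this]
  · have h1 : ∀ R ∈ (Fi \ Bi).powerset, (-1 : ℚ) ^ R.card * eV (Bi ∪ R) S = 0 := by
      intro R _; unfold eV
      rw [if_neg, mul_zero]
      intro h; exact hB ((Finset.subset_union_left).trans h)
    rw [Finset.sum_congr rfl h1, Finset.sum_const_zero]
    rw [if_neg]
    intro h; apply hB; rw [← h]; exact Finset.inter_subset_left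

def gV (Bi Fi S : Finset α) : ℚ :=
  (if S ∩ Fi = Bi then 1 else 0) - (-1 : ℚ) ^ ((Fi \ Bi).card) * eV Fi S

def hV (d : ℕ) (H S : Finset α) : ℚ := eV H S * ((S.card : ℚ) - (d + 1))

lemma gV_eq_sum (Bi Fi : Finset α) (hBF : Bi ⊆ Fi) (S : Finset α) :
    gV Bi Fi S
      = ∑ R ∈ ((Fi \ Bi).powerset).erase (Fi \ Bi), (-1 : ℚ) ^ R.card * eV (Bi ∪ R) S := by
  have h := expand Bi Fi S hBF
  rw [← Finset.add_sum_erase _ _ (Finset.mem_powerset_self (Fi \ Bi))] at h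
  rw [Finset.union_sdiff_of_subset hBF] at h
  unfold gV; linarith

lemma hV_eq_sum (d : ℕ) (H : Finset α) (S : Finset α) :
    hV d H S = (∑ x : α, eV (insert x H) S) - ((d : ℚ) + 1) * eV H S := by
  unfold hV eV
  by_cases hH : H ⊆ S
  · rw [if_pos hH, one_mul]
    have h1 : ∀ x : α, (if insert x H ⊆ S then (1 : ℚ) else 0) = if x ∈ S then 1 else 0 := by
      intro x; simp only [Finset.insert_subset_iff, hH, and_true]
    rw [Finset.sum_congr rfl (fun x _ => h1 x)]
    rw [Finset.sum_boole]
    simp [Finset.filter_mem_eq_inter]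
  · rw [if_neg hH]
    have h1 : ∀ x : α, (if insert x H ⊆ S then (1 : ℚ) else 0) = 0 := by
      intro x; rw [if_neg]; intro h; exact hH ((Finset.subset_insert x H).trans h)
    rw [Finset.sum_congr rfl (fun x _ => h1 x)]
    simp

lemma eV_indep_aux : ∀ (s : Finset (Finset α)) (c : Finset α → ℚ),
    (∀ S, ∑ K ∈ s, c K * eV K S = 0) → ∀ K ∈ s, c K = 0 := by
  intro s
  induction s using Finset.strongInduction with
  | _ s ih =>
    intro c hc K hK
    obtain ⟨K0, hK0, hmin⟩ := Finset.exists_min_image s (fun K => K.card) ⟨K, hK⟩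
    have hcK0 : c K0 = 0 := by
      have h := hc K0
      rw [Finset.sum_eq_single_of_mem K0 hK0] at h
      · unfold eV at h; simpa using h
      · intro b hb hne
        unfold eV
        rw [if_neg, mul_zero]
        intro hsub
        exact hne (Finset.eq_of_subset_of_card_le hsub (hmin b hb))
    by_cases hKK : K = K0
    · rw [hKK]; exact hcK0
    · refine ih (s.erase K0) (Finset.erase_ssubset hK0) c ?_ K (Finset.mem_erase.2 ⟨hKK, hK⟩)
      intro S
      have h := hc S
      rw [← Finset.add_sum_erase _ _ hK0, hcK0, zero_mul, zero_add] at h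
      exact h

lemma eV_indep : LinearIndependent ℚ (fun K : Finset α => eV K) := by
  rw [linearIndependent_iff']
  intro s g hsum K hK
  refine eV_indep_aux s g ?_ K hK
  intro S
  have := congrFun hsum S
  simpa [Finset.sum_apply] using this

end Stmt19

open Finset Stmt19 in
theorem stmt_19 (n d m : ℕ) (hd : 1 ≤ d) (hn : d + 1 ≤ n)
    (F B : Fin m → Finset (Fin n))
    (hinj : Function.Injective F)
    (hunif : ∀ i, (F i).card = d + 1)
    (hBF : ∀ i, B i ⊆ F i)
    (hwit : ∀ i j, F j ∩ F i ≠ B i)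
    (hcard : m = n.choose d) :
    ∀ Y : Finset (Fin n), Y.card = d + 1 → (∀ i, Y ≠ F i) →
      ∀ Z ⊂ Y, ∃! i, F i ∩ Y = Z ∧ B i = Z := by
  classical
  intro Y hYcard hYF Z hZY
  -- index type for the combined family
  let κ := {H : Finset (Fin n) // H.card < d}
  let ι := (Fin m) ⊕ κ
  let v : ι → (Finset (Fin n) → ℚ) :=
    Sum.elim (fun i => fun S => gV (B i) (F i) S) (fun H => fun S => hV d H.1 S)
  let e' : {K : Finset (Fin n) // K.card ≤ d} → (Finset (Fin n) → ℚ) := fun K => eV K.1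
  let U : Submodule ℚ (Finset (Fin n) → ℚ) := Submodule.span ℚ (Set.range e')
  -- membership of the g-type vectors in U
  have hgU : ∀ Bi Fi : Finset (Fin n), Bi ⊆ Fi → Fi.card = d + 1 →
      (fun S => gV Bi Fi S) ∈ U := by
    intro Bi Fi hBFi hFc
    have hfe : (fun S => gV Bi Fi S)
        = ∑ R ∈ ((Fi \ Bi).powerset).erase (Fi \ Bi),
            ((-1 : ℚ) ^ R.card) • (fun S => eV (Bi ∪ R) S) := by
      funext S
      rw [gV_eq_sum Bi Fi hBFi S]
      simp [Finset.sum_apply]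
    rw [hfe]
    apply Submodule.sum_mem
    intro R hR
    apply Submodule.smul_mem
    apply Submodule.subset_span
    rw [Finset.mem_erase, Finset.mem_powerset] at hR
    have hRlt : R.card < (Fi \ Bi).card :=
      Finset.card_lt_card (lt_of_le_of_ne hR.2 hR.1)
    have hcardle : (Bi ∪ R).card ≤ d := by
      have h1 := Finset.card_union_le Bi R
      have h2 : (Fi \ Bi).card = Fi.card - Bi.card := Finset.card_sdiff_of_subset hBFi
      have h3 : Bi.card ≤ Fi.card := Finset.card_le_card hBFi
      omega
    exact ⟨⟨Bi ∪ R, hcardle⟩, rfl⟩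
  -- membership of the h-type vectors in U
  have hhU : ∀ H : Finset (Fin n), H.card < d → (fun S => hV d H S) ∈ U := by
    intro H hH
    have hfe : (fun S => hV d H S)
        = (∑ x : Fin n, (fun S => eV (insert x H) S)) - ((d : ℚ) + 1) • (fun S => eV H S) := by
      funext S
      rw [hV_eq_sum d H S]
      simp [Finset.sum_apply]
    rw [hfe]
    apply Submodule.sub_mem
    · apply Submodule.sum_mem
      intro x _
      apply Submodule.subset_span
      have : (insert x H).card ≤ d := le_trans (Finset.card_insert_le x H) (by omega)
      exact ⟨⟨insert x H, this⟩, rfl⟩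
    · apply Submodule.smul_mem
      apply Submodule.subset_span
      exact ⟨⟨H, le_of_lt hH⟩, rfl⟩
  have hvU : ∀ i : ι, v i ∈ U := by
    intro i
    cases i with
    | inl i => exact hgU (B i) (F i) (hBF i) (hunif i)
    | inr H => exact hhU H.1 H.2
  -- evaluation of a combination at F j
  have heval_F : ∀ (c : ι → ℚ) (j : Fin m),
      (∑ i : ι, c i * v i (F j)) = c (Sum.inl j) * (-(-1 : ℚ) ^ ((F j \ B j).card)) := by
    intro c j
    rw [Fintype.sum_sum_type]
    have hh0 : ∀ H : κ, c (Sum.inr H) * v (Sum.inr H) (F j) = 0 := by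
      intro H
      have : hV d H.1 (F j) = 0 := by
        unfold hV; rw [hunif j]; push_cast; ring
      simp [v, this]
    rw [Finset.sum_congr rfl (fun H _ => hh0 H), Finset.sum_const_zero, add_zero]
    rw [Finset.sum_eq_single j]
    · congr 1
      have h1 : F j ≠ B j := by
        have := hwit j j; rwa [Finset.inter_self] at this
      simp [v, gV, eV, h1]
    · intro b _ hbj
      have h1 : ¬ F b ⊆ F j := by
        intro hsub
        have : F b = F j := Finset.eq_of_subset_of_card_le hsub (by rw [hunif, hunif])
        exact hbj (hinj this)
      simp [v, gV, eV, hwit b j, h1]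
    · intro h; exact absurd (Finset.mem_univ j) h
  -- evaluation of a combination at Y
  have heval_Y : ∀ (c : ι → ℚ),
      (∑ i : ι, c i * v i Y)
        = ∑ i : Fin m, c (Sum.inl i) * (if Y ∩ F i = B i then 1 else 0) := by
    intro c
    rw [Fintype.sum_sum_type]
    have hh0 : ∀ H : κ, c (Sum.inr H) * v (Sum.inr H) Y = 0 := by
      intro H
      have : hV d H.1 Y = 0 := by
        unfold hV; rw [hYcard]; push_cast; ring
      simp [v, this]
    rw [Finset.sum_congr rfl (fun H _ => hh0 H), Finset.sum_const_zero, add_zero]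
    refine Finset.sum_congr rfl fun i _ => ?_
    congr 1
    have h1 : ¬ F i ⊆ Y := fun hsub =>
      hYF i (Finset.eq_of_subset_of_card_le hsub (by rw [hunif, hYcard])).symm
    simp [v, gV, eV, h1]
  -- linear independence of the combined family
  have hvind : LinearIndependent ℚ v := by
    rw [Fintype.linearIndependent_iff]
    intro c hc
    have hc' : ∀ S, ∑ i : ι, c i * v i S = 0 := by
      intro S
      have := congrFun hc S
      simpa [Finset.sum_apply] using this
    have hlam : ∀ j : Fin m, c (Sum.inl j) = 0 := by
      intro j
      have h := hc' (F j)
      rw [heval_F c j] at h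
      have hne : (-(-1 : ℚ) ^ ((F j \ B j).card)) ≠ 0 := by
        simp
      exact (mul_eq_zero.1 h).resolve_right hne
    have hmu : ∀ H : κ, c (Sum.inr H) = 0 := by
      by_contra hne
      push_neg at hne
      obtain ⟨H', hH'⟩ := hne
      set t : Finset κ := Finset.univ.filter (fun H : κ => c (Sum.inr H) ≠ 0) with ht
      have hH't : H' ∈ t := by rw [ht, Finset.mem_filter]; exact ⟨Finset.mem_univ _, hH'⟩
      obtain ⟨H0, hH0t, hmin⟩ := Finset.exists_min_image t (fun H => H.1.card) ⟨H', hH't⟩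
      have hc0 : c (Sum.inr H0) ≠ 0 := (Finset.mem_filter.1 hH0t).2
      have h := hc' H0.1
      rw [Fintype.sum_sum_type] at h
      rw [Finset.sum_congr rfl (fun i _ => by rw [hlam i, zero_mul]),
        Finset.sum_const_zero, zero_add] at h
      rw [Finset.sum_eq_single_of_mem H0 (Finset.mem_univ _)] at h
      · have hval : v (Sum.inr H0) H0.1 = ((H0.1.card : ℚ) - (d + 1)) := by
          unfold v hV eV
          simp
        rw [hval] at h
        have hne2 : ((H0.1.card : ℚ) - (d + 1)) ≠ 0 := by
          have : H0.1.card < d + 1 := Nat.lt_succ_of_lt H0.2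
          intro hz
          have : (H0.1.card : ℚ) = (d + 1 : ℚ) := by linarith
          have : H0.1.card = d + 1 := by exact_mod_cast this
          omega
        exact hc0 ((mul_eq_zero.1 h).resolve_right hne2)
      · intro H _ hHH0
        by_cases hcH : c (Sum.inr H) = 0
        · rw [hcH, zero_mul]
        · have hHt : H ∈ t := by rw [ht, Finset.mem_filter]; exact ⟨Finset.mem_univ _, hcH⟩
          have : ¬ H.1 ⊆ H0.1 := by
            intro hsub
            apply hHH0
            apply Subtype.ext
            exact Finset.eq_of_subset_of_card_le hsub (hmin H hHt)
          have : v (Sum.inr H) H0.1 = 0 := by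
            unfold v hV eV
            simp [this]
          rw [this, mul_zero]
    intro i
    cases i with
    | inl i => exact hlam i
    | inr H => exact hmu H
  -- dimension count
  have hfil : ∀ t : ℕ, (Finset.univ.filter (fun K : Finset (Fin n) => K.card < t)).card
      = ∑ k ∈ Finset.range t, n.choose k := by
    intro t
    have hbu : Finset.univ.filter (fun K : Finset (Fin n) => K.card < t)
        = (Finset.range t).biUnion (fun k => Finset.powersetCard k Finset.univ) := by
      ext K
      simp [Finset.mem_biUnion, Finset.mem_powersetCard_univ, eq_comm]
    rw [hbu, Finset.card_biUnion]
    · refine Finset.sum_congr rfl fun k _ => ?_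
      rw [Finset.card_powersetCard, Finset.card_univ, Fintype.card_fin]
    · intro a _ b _ hab
      unfold Function.onFun; rw [Finset.disjoint_left]
      intro K hKa hKb
      exact hab (by rw [← Finset.mem_powersetCard_univ.1 hKa, Finset.mem_powersetCard_univ.1 hKb])
  have hcards : Fintype.card ι = Fintype.card {K : Finset (Fin n) // K.card ≤ d} := by
    rw [Fintype.card_sum, Fintype.card_fin, Fintype.card_subtype, Fintype.card_subtype]
    have h1 : (Finset.univ.filter (fun K : Finset (Fin n) => K.card ≤ d))
        = Finset.univ.filter (fun K : Finset (Fin n) => K.card < d + 1) := by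
      apply Finset.filter_congr; intro K _; simp [Nat.lt_succ_iff]
    rw [h1, hfil, hfil, Finset.sum_range_succ, hcard]
    omega
  -- U is finite dimensional with the right rank
  have heind : LinearIndependent ℚ e' := eV_indep.comp Subtype.val Subtype.val_injective
  have hfinU : FiniteDimensional ℚ U := FiniteDimensional.span_of_finite ℚ (Set.finite_range e')
  have hrank : Module.finrank ℚ U = Fintype.card {K : Finset (Fin n) // K.card ≤ d} :=
    finrank_span_eq_card heind
  -- the family spans U
  let v' : ι → U := fun i => ⟨v i, hvU i⟩
  have hv'ind : LinearIndependent ℚ v' := by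
    apply LinearIndependent.of_comp U.subtype
    convert hvind
    rfl
  have hspan : Submodule.span ℚ (Set.range v') = ⊤ :=
    hv'ind.span_eq_top_of_card_eq_finrank' (by rw [hcards, hrank])
  -- y is in U, hence a combination
  have hyU : (fun S => gV Z Y S) ∈ U := hgU Z Y hZY.subset hYcard
  have hymem : (⟨fun S => gV Z Y S, hyU⟩ : U) ∈ Submodule.span ℚ (Set.range v') := by
    rw [hspan]; exact Submodule.mem_top
  rw [Submodule.mem_span_range_iff_exists_fun] at hymem
  obtain ⟨cc, hcc⟩ := hymem
  have hccf : ∀ S, ∑ i : ι, cc i * v i S = gV Z Y S := by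
    intro S
    have h := congrArg (fun u : U => (u : Finset (Fin n) → ℚ) S) hcc
    simpa [AddSubmonoidClass.coe_finset_sum, Finset.sum_apply] using h
  -- coefficients of the g-part
  have hlamval : ∀ j : Fin m,
      cc (Sum.inl j) * (-(-1 : ℚ) ^ ((F j \ B j).card)) = (if F j ∩ Y = Z then 1 else 0) := by
    intro j
    have h := hccf (F j)
    rw [heval_F cc j] at h
    have h1 : ¬ Y ⊆ F j := fun hsub =>
      hYF j (Finset.eq_of_subset_of_card_le hsub (by rw [hYcard, hunif]))
    rw [h]
    simp [gV, eV, h1]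
  have hY := hccf Y
  rw [heval_Y cc] at hY
  have hgYY : gV Z Y Y = -(-1 : ℚ) ^ ((Y \ Z).card) := by
    have h1 : Y ≠ Z := fun h => (ne_of_ssubset hZY) h.symm
    have h2 : Y ∩ Y = Y := Finset.inter_self Y
    simp [gV, eV, h2, h1]
  rw [hgYY] at hY
  -- rewrite each term of the sum
  set w : ℚ := -(-1 : ℚ) ^ ((Y \ Z).card) with hw
  have hterm : ∀ i : Fin m, cc (Sum.inl i) * (if Y ∩ F i = B i then 1 else 0)
      = if F i ∩ Y = Z ∧ B i = Z then w else 0 := by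
    intro i
    set s : ℚ := -(-1 : ℚ) ^ ((F i \ B i).card) with hs
    have hss : s * s = 1 := by
      rw [hs, neg_mul_neg, ← pow_add]
      exact Even.neg_one_pow ⟨(F i \ B i).card, rfl⟩
    have hcci : cc (Sum.inl i) = (if F i ∩ Y = Z then (1 : ℚ) else 0) * s := by
      have := hlamval i
      rw [← hs] at this
      calc cc (Sum.inl i) = cc (Sum.inl i) * (s * s) := by rw [hss, mul_one]
        _ = (cc (Sum.inl i) * s) * s := by ring
        _ = (if F i ∩ Y = Z then (1 : ℚ) else 0) * s := by rw [this]
    rw [hcci]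
    by_cases hFZ : F i ∩ Y = Z
    · by_cases hBZ : B i = Z
      · have hYF2 : Y ∩ F i = B i := by rw [Finset.inter_comm, hFZ, hBZ]
        have he1 : (F i \ B i).card = d + 1 - Z.card := by
          rw [Finset.card_sdiff_of_subset (hBF i), hunif i, hBZ]
        have he2 : (Y \ Z).card = d + 1 - Z.card := by
          rw [Finset.card_sdiff_of_subset hZY.subset, hYcard]
        simp only [if_pos hFZ, if_pos hYF2, one_mul, mul_one,
          if_pos (And.intro hFZ hBZ)]
        rw [hs, hw, he1, he2]
      · have hYF2 : Y ∩ F i ≠ B i := by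
          rw [Finset.inter_comm, hFZ]; exact fun h => hBZ h.symm
        simp [hYF2, hBZ]
    · simp [hFZ]
  rw [Finset.sum_congr rfl (fun i _ => hterm i)] at hY
  rw [← Finset.sum_filter, Finset.sum_const, nsmul_eq_mul] at hY
  have hwne : w ≠ 0 := by
    rw [hw]; simp
  have hcnt : (Finset.univ.filter (fun i : Fin m => F i ∩ Y = Z ∧ B i = Z)).card = 1 := by
    have h2 : (((Finset.univ.filter (fun i : Fin m => F i ∩ Y = Z ∧ B i = Z)).card : ℚ) - 1) * w
        = 0 := by linear_combination hY
    rcases mul_eq_zero.1 h2 with h | h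
    · have : ((Finset.univ.filter (fun i : Fin m => F i ∩ Y = Z ∧ B i = Z)).card : ℚ) = 1 := by
        linarith
      exact_mod_cast this
    · exact absurd h hwne
  obtain ⟨i0, hi0⟩ := Finset.card_eq_one.1 hcnt
  refine ⟨i0, ?_, ?_⟩
  · have : i0 ∈ Finset.univ.filter (fun i : Fin m => F i ∩ Y = Z ∧ B i = Z) := by
      rw [hi0]; exact Finset.mem_singleton_self i0
    exact (Finset.mem_filter.1 this).2
  · intro j hj
    have : j ∈ Finset.univ.filter (fun i : Fin m => F i ∩ Y = Z ∧ B i = Z) :=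
      Finset.mem_filter.2 ⟨Finset.mem_univ _, hj⟩
    rw [hi0] at this
    exact Finset.mem_singleton.1 this
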